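/- Under Assumptions (A1) and (A2), fix y_t ∈ Y, a vector g̃_t with ‖g̃_t‖ ≤ G̃_F, and let y_{t+1} = argmin_{y∈Y} { ⟨g̃_t, y − y_t⟩ + (1/η) D_R(y‖y_t) }. Define ε_t^{OMD}(y) = (1/η)( D_R(y‖y_t) − (1/2)(y − y_t)ᵀ∇²R(y_t)(y − y_t) ). Then ‖∇ε_t^{OMD}(y_{t+1})‖ ≤ 2 G G̃_F² η. -/

import Mathlib

open scoped RealInnerProductSpace

/-- Bregman divergence `D_R(x ‖ y) = R x - R y - ⟪∇R y, x - y⟫`. -/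
noncomputable def bregman {E : Type*} [NormedAddCommGroup E] [InnerProductSpace ℝ E]
    [CompleteSpace E] (R : E → ℝ) (x y : E) : ℝ :=
  R x - R y - ⟪gradient R y, x - y⟫

/-- bound on the gradient of the OMD Taylor-remainder perturbation
`ε_t^{OMD}(y) = (1/η)(D_R(y‖y_t) - ½ (y-y_t)ᵀ∇²R(y_t)(y-y_t))` at the mirror-descent iterate,
where `∇ε_t^{OMD}(y) = (1/η)(∇R(y) - ∇R(y_t) - ∇²R(y_t)(y - y_t))`. -/
theorem norm_grad_eps_omd
    {d : ℕ} (Y : Set (EuclideanSpace ℝ (Fin d)))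
    (hYne : Y.Nonempty) (hYcv : Convex ℝ Y) (hYcp : IsCompact Y)
    (R : EuclideanSpace ℝ (Fin d) → ℝ)
    (HR : EuclideanSpace ℝ (Fin d) →
      EuclideanSpace ℝ (Fin d) →L[ℝ] EuclideanSpace ℝ (Fin d))
    (hHR : ∀ z ∈ Y, HasFDerivAt (gradient R) (HR z) z)
    (G : ℝ) (hG : 1 < G)
    (hRsc : ∀ x ∈ Y, ∀ y ∈ Y, (1 / 2) * ‖x - y‖ ^ 2 ≤ bregman R x y)
    (hgradRbd : ∀ z ∈ Y, ‖gradient R z‖ ≤ G)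
    (T3 : EuclideanSpace ℝ (Fin d) →
      EuclideanSpace ℝ (Fin d) →L[ℝ] EuclideanSpace ℝ (Fin d) →L[ℝ] EuclideanSpace ℝ (Fin d))
    (hT3 : ∀ z ∈ Y, HasFDerivAt HR (T3 z) z) (hT3bd : ∀ z ∈ Y, ‖T3 z‖ ≤ G)
    (η GtF : ℝ) (hη : 0 < η) (hGtF : 0 < GtF)
    (yt : EuclideanSpace ℝ (Fin d)) (hyt : yt ∈ Y)
    (gtil : EuclideanSpace ℝ (Fin d)) (hgtil : ‖gtil‖ ≤ GtF)
    (yt1 : EuclideanSpace ℝ (Fin d)) (hyt1mem : yt1 ∈ Y)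
    (hyt1 : IsMinOn (fun y => ⟪gtil, y - yt⟫ + (1 / η) * bregman R y yt) Y yt1) :
    ‖(1 / η) • (gradient R yt1 - gradient R yt - HR yt (yt1 - yt))‖ ≤ 2 * G * GtF ^ 2 * η := by
  set v := yt1 - yt with hv
  have hG0 : (0:ℝ) ≤ G := le_of_lt (lt_trans one_pos hG)
  -- Step 1: ‖v‖ ≤ 2 η GtF
  have hstep : ‖v‖ ≤ 2 * η * GtF := by
    have hmin := hyt1 hyt
    simp only [Set.mem_setOf_eq] at hmin
    have hb0 : bregman R yt yt = 0 := by simp [bregman]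
    have h1 : ⟪gtil, yt1 - yt⟫ + (1 / η) * bregman R yt1 yt ≤ 0 := by
      simpa [hb0] using hmin
    have h2 : (1 / 2) * ‖v‖ ^ 2 ≤ bregman R yt1 yt := hRsc yt1 hyt1mem yt hyt
    have h3 : bregman R yt1 yt ≤ η * GtF * ‖v‖ := by
      have hinner : -⟪gtil, yt1 - yt⟫ ≤ GtF * ‖v‖ := by
        calc -⟪gtil, yt1 - yt⟫ ≤ |⟪gtil, yt1 - yt⟫| := neg_le_abs _
          _ ≤ ‖gtil‖ * ‖yt1 - yt‖ := abs_real_inner_le_norm _ _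
          _ ≤ GtF * ‖v‖ := by
              exact mul_le_mul_of_nonneg_right hgtil (norm_nonneg _)
      have : (1 / η) * bregman R yt1 yt ≤ -⟪gtil, yt1 - yt⟫ := by linarith
      have h4 : (1 / η) * bregman R yt1 yt ≤ GtF * ‖v‖ := this.trans hinner
      have hb : bregman R yt1 yt = η * ((1 / η) * bregman R yt1 yt) := by
        field_simp
      rw [hb]
      calc η * ((1 / η) * bregman R yt1 yt) ≤ η * (GtF * ‖v‖) :=
            mul_le_mul_of_nonneg_left h4 hη.le
        _ = η * GtF * ‖v‖ := by ring
    rcases eq_or_lt_of_le (norm_nonneg v) with h0 | h0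
    · simp [← h0]; positivity
    · have : (1 / 2) * ‖v‖ ^ 2 ≤ η * GtF * ‖v‖ := h2.trans h3
      have : ‖v‖ * ‖v‖ ≤ (2 * η * GtF) * ‖v‖ := by nlinarith
      exact le_of_mul_le_mul_right this h0
  -- Step 2: Taylor remainder bound ‖∇R yt1 - ∇R yt - HR yt v‖ ≤ (G/2) ‖v‖²
  have hLip : ∀ z ∈ Y, ‖HR z - HR yt‖ ≤ G * ‖z - yt‖ := fun z hz =>
    hYcv.norm_image_sub_le_of_norm_hasFDerivWithin_le
      (fun w hw => (hT3 w hw).hasFDerivWithinAt) hT3bd hyt hz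
  set γ : ℝ → EuclideanSpace ℝ (Fin d) := fun t => yt + t • v with hγ
  have hγmem : ∀ t ∈ Set.Icc (0:ℝ) 1, γ t ∈ Y := by
    intro t ht
    have h := hYcv hyt hyt1mem (by linarith [ht.1, ht.2] : (0:ℝ) ≤ 1 - t) ht.1 (by ring)
    have : (1 - t) • yt + t • yt1 = γ t := by
      simp only [hγ, hv]; module
    rwa [this] at h
  set f : ℝ → EuclideanSpace ℝ (Fin d) :=
    fun t => gradient R (γ t) - gradient R yt - t • HR yt v with hf
  have hγd : ∀ t : ℝ, HasDerivAt γ v t := by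
    intro t
    have h := ((hasDerivAt_id t).smul_const v).const_add yt
    simp only [id, one_smul] at h
    exact h
  have hfd : ∀ t ∈ Set.Icc (0:ℝ) 1,
      HasDerivAt f (HR (γ t) v - HR yt v) t := by
    intro t ht
    have h1 : HasDerivAt (fun s => gradient R (γ s)) (HR (γ t) v) t :=
      (hHR (γ t) (hγmem t ht)).comp_hasDerivAt t (hγd t)
    have h2 : HasDerivAt (fun s : ℝ => s • HR yt v) (HR yt v) t := by
      simpa using (hasDerivAt_id t).smul_const (HR yt v)
    exact (h1.sub_const (gradient R yt)).sub h2
  have key : ∀ x ∈ Set.Icc (0:ℝ) 1, ‖f x‖ ≤ G * ‖v‖ ^ 2 * x ^ 2 / 2 := by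
    intro x hx
    refine image_norm_le_of_norm_deriv_right_le_deriv_boundary
      (f' := fun t => HR (γ t) v - HR yt v)
      (B := fun t => G * ‖v‖ ^ 2 * t ^ 2 / 2)
      (B' := fun t => G * ‖v‖ ^ 2 * t) ?_ ?_ ?_ ?_ ?_ hx
    · intro t ht
      exact (hfd t ht).continuousAt.continuousWithinAt
    · intro t ht
      exact (hfd t (Set.Ico_subset_Icc_self ht)).hasDerivWithinAt
    · simp [hf, hγ]
    · intro x
      have : HasDerivAt (fun t : ℝ => G * ‖v‖ ^ 2 * t ^ 2 / 2)
          (G * ‖v‖ ^ 2 * (2 * x) / 2) x := by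
        simpa using ((hasDerivAt_pow 2 x).const_mul (G * ‖v‖ ^ 2)).div_const 2
      convert this using 1; ring
    · intro t ht
      have h1 : ‖HR (γ t) v - HR yt v‖ ≤ ‖HR (γ t) - HR yt‖ * ‖v‖ := by
        have h := (HR (γ t) - HR yt).le_opNorm v
        rwa [ContinuousLinearMap.sub_apply] at h
      have h2 : ‖HR (γ t) - HR yt‖ ≤ G * (t * ‖v‖) := by
        have h := hLip (γ t) (hγmem t (Set.Ico_subset_Icc_self ht))
        have hγt : γ t - yt = t • v := by simp [hγ]
        rw [hγt, norm_smul, Real.norm_eq_abs, abs_of_nonneg ht.1] at h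
        linarith
      calc ‖HR (γ t) v - HR yt v‖ ≤ (G * (t * ‖v‖)) * ‖v‖ :=
            h1.trans (mul_le_mul_of_nonneg_right h2 (norm_nonneg _))
        _ = G * ‖v‖ ^ 2 * t := by ring
  have hkey1 : ‖gradient R yt1 - gradient R yt - HR yt v‖ ≤ G * ‖v‖ ^ 2 / 2 := by
    have := key 1 (by norm_num)
    have hγ1 : γ 1 = yt1 := by simp [hγ, hv]
    simpa [hf, hγ1] using this
  -- conclude
  rw [norm_smul]
  have hnv2 : ‖v‖ ^ 2 ≤ (2 * η * GtF) ^ 2 := by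
    have := sq_le_sq' (by linarith [norm_nonneg v] : -(2 * η * GtF) ≤ ‖v‖) hstep
    simpa using this
  have h5 : ‖gradient R yt1 - gradient R yt - HR yt v‖ ≤ G * (2 * η * GtF) ^ 2 / 2 := by
    refine hkey1.trans ?_
    have := mul_le_mul_of_nonneg_left hnv2 hG0
    linarith
  have hpos : ‖(1/η : ℝ)‖ = 1 / η := by
    rw [Real.norm_eq_abs, abs_of_pos]; positivity
  rw [hpos]
  calc (1 / η) * ‖gradient R yt1 - gradient R yt - HR yt v‖
      ≤ (1 / η) * (G * (2 * η * GtF) ^ 2 / 2) := by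
        apply mul_le_mul_of_nonneg_left h5; positivity
    _ = 2 * G * GtF ^ 2 * η := by field_simp
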